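/- Let b₀, b₁, b₂ : ℝ → ℝ be differentiable with b₀(t) > 0 and b₂(t) > 0 for all t, and let c₀, c₁, c₂ be real constants with c₀ > 0 and c₂ > 0. Set D(t) = √(b₀(t) b₂(t) / (c₀ c₂)) and α(t) = (b₂(t) c₀ / (b₀(t) c₂))^{1/4}. Then the transformed coefficients b'₀ = α² b₀, b'₁ = b₁ + 2 α'/α, b'₂ = α⁻² b₂ satisfy b'ᵢ(t) = D(t) cᵢ for i = 0, 1, 2 and all t if and only if b₁(t) + (1/2)(b₂'(t)/b₂(t) − b₀'(t)/b₀(t)) = c₁ √(b₀(t) b₂(t)/(c₀ c₂)) for all t. (In fact b'₀ = D c₀ and b'₂ = D c₂ hold automatically, and the displayed condition is equivalent to b'₁ = D c₁.) -/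

import Mathlib

/-- With `b₀, b₂ > 0`, `c₀, c₂ > 0`, `D = √(b₀ b₂/(c₀ c₂))` and
`α = (b₂ c₀/(b₀ c₂))^{1/4}`, the transformed coefficients `b'₀ = α² b₀`,
`b'₁ = b₁ + 2α'/α`, `b'₂ = α⁻² b₂` satisfy `b'ᵢ = D cᵢ` (i = 0,1,2) for all `t`
iff the integrability condition
`b₁ + (1/2)(b₂'/b₂ − b₀'/b₀) = c₁ √(b₀ b₂/(c₀ c₂))` holds for all `t`. -/
theorem diag_transform_integrability_iff
    (b₀ b₁ b₂ : ℝ → ℝ)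
    (hb₀ : Differentiable ℝ b₀) (hb₁ : Differentiable ℝ b₁) (hb₂ : Differentiable ℝ b₂)
    (hb₀pos : ∀ t, 0 < b₀ t) (hb₂pos : ∀ t, 0 < b₂ t)
    (c₀ c₁ c₂ : ℝ) (hc₀ : 0 < c₀) (hc₂ : 0 < c₂)
    (D α : ℝ → ℝ)
    (hD : ∀ t, D t = Real.sqrt (b₀ t * b₂ t / (c₀ * c₂)))
    (hα : ∀ t, α t = (b₂ t * c₀ / (b₀ t * c₂)) ^ ((1 : ℝ) / 4)) :
    (∀ t, (α t) ^ 2 * b₀ t = D t * c₀ ∧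
        b₁ t + 2 * deriv α t / α t = D t * c₁ ∧
        (α t)⁻¹ ^ 2 * b₂ t = D t * c₂) ↔
      (∀ t, b₁ t + (1 / 2) * (deriv b₂ t / b₂ t - deriv b₀ t / b₀ t) =
        c₁ * Real.sqrt (b₀ t * b₂ t / (c₀ * c₂))) := by
  have hαe : α = fun t => (b₂ t * c₀ / (b₀ t * c₂)) ^ ((1 : ℝ) / 4) := funext hα
  have hg : ∀ t, 0 < b₂ t * c₀ / (b₀ t * c₂) := fun t => by
    have := hb₀pos t; have := hb₂pos t; positivity
  have hαpos : ∀ t, 0 < α t := fun t => by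
    rw [hα t]; exact Real.rpow_pos_of_pos (hg t) _
  have hDpos : ∀ t, 0 < D t := fun t => by
    rw [hD t]
    have := hb₀pos t; have := hb₂pos t
    exact Real.sqrt_pos.mpr (by positivity)
  have hα4 : ∀ t, (α t) ^ (4 : ℕ) = b₂ t * c₀ / (b₀ t * c₂) := by
    intro t
    rw [hα t, ← Real.rpow_natCast (_ ^ _) 4, ← Real.rpow_mul (le_of_lt (hg t))]
    norm_num
  have hD2 : ∀ t, (D t) ^ 2 = b₀ t * b₂ t / (c₀ * c₂) := by
    intro t
    have := hb₀pos t; have := hb₂pos t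
    rw [hD t, Real.sq_sqrt (by positivity)]
  -- derivative identity
  have hderiv : ∀ t, 2 * deriv α t / α t
      = (1 / 2) * (deriv b₂ t / b₂ t - deriv b₀ t / b₀ t) := by
    intro t
    have hb0ne : b₀ t ≠ 0 := ne_of_gt (hb₀pos t)
    have hb2ne : b₂ t ≠ 0 := ne_of_gt (hb₂pos t)
    have hc0ne : c₀ ≠ 0 := ne_of_gt hc₀
    have hc2ne : c₂ ≠ 0 := ne_of_gt hc₂
    have hgne : b₀ t * c₂ ≠ 0 := by positivity
    have hgder : HasDerivAt (fun t => b₂ t * c₀ / (b₀ t * c₂))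
        ((deriv b₂ t * c₀ * (b₀ t * c₂) - b₂ t * c₀ * (deriv b₀ t * c₂)) / (b₀ t * c₂) ^ 2) t :=
      ((hb₂ t).hasDerivAt.mul_const c₀).div ((hb₀ t).hasDerivAt.mul_const c₂) hgne
    have hαder : HasDerivAt α
        ((deriv b₂ t * c₀ * (b₀ t * c₂) - b₂ t * c₀ * (deriv b₀ t * c₂)) / (b₀ t * c₂) ^ 2
          * ((1 : ℝ) / 4) * (b₂ t * c₀ / (b₀ t * c₂)) ^ ((1 : ℝ) / 4 - 1)) t := by
      rw [hαe]
      exact hgder.rpow_const (Or.inl (ne_of_gt (hg t)))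
    rw [hαder.deriv, hα t]
    set g : ℝ := b₂ t * c₀ / (b₀ t * c₂) with hgdef
    set g' : ℝ := (deriv b₂ t * c₀ * (b₀ t * c₂) - b₂ t * c₀ * (deriv b₀ t * c₂)) / (b₀ t * c₂) ^ 2
      with hg'def
    have hgpos : 0 < g := hg t
    have hgne0 : g ≠ 0 := ne_of_gt hgpos
    have h1 : g ^ ((1 : ℝ) / 4 - 1) = g ^ ((1 : ℝ) / 4) / g := by
      rw [Real.rpow_sub hgpos, Real.rpow_one]
    have hne4 : g ^ ((1 : ℝ) / 4) ≠ 0 := ne_of_gt (Real.rpow_pos_of_pos hgpos _)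
    rw [h1]
    have key : 2 * (g' * ((1 : ℝ) / 4) * (g ^ ((1 : ℝ) / 4) / g)) / g ^ ((1 : ℝ) / 4)
        = (1 / 2) * (g' / g) := by
      field_simp
      ring
    rw [key]
    have hg'g : g' / g = deriv b₂ t / b₂ t - deriv b₀ t / b₀ t := by
      rw [hg'def, hgdef]
      field_simp
    rw [hg'g]
  -- automatic identities
  have h0 : ∀ t, (α t) ^ 2 * b₀ t = D t * c₀ := by
    intro t
    have hl : 0 < (α t) ^ 2 * b₀ t := by have := hαpos t; have := hb₀pos t; positivity
    have hr : 0 < D t * c₀ := by have := hDpos t; positivity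
    have hsq : ((α t) ^ 2 * b₀ t) ^ 2 = (D t * c₀) ^ 2 := by
      have e : ((α t) ^ 2 * b₀ t) ^ 2 = (α t) ^ (4 : ℕ) * (b₀ t) ^ 2 := by ring
      have hb0ne : b₀ t ≠ 0 := ne_of_gt (hb₀pos t)
      have hc0ne : c₀ ≠ 0 := ne_of_gt hc₀
      have hc2ne : c₂ ≠ 0 := ne_of_gt hc₂
      rw [e, hα4 t, mul_pow, hD2 t]
      field_simp
    nlinarith [hsq, hl, hr]
  have h2 : ∀ t, (α t)⁻¹ ^ 2 * b₂ t = D t * c₂ := by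
    intro t
    have hl : 0 < (α t)⁻¹ ^ 2 * b₂ t := by have := hαpos t; have := hb₂pos t; positivity
    have hr : 0 < D t * c₂ := by have := hDpos t; positivity
    have hαne : α t ≠ 0 := ne_of_gt (hαpos t)
    have hsq : ((α t)⁻¹ ^ 2 * b₂ t) ^ 2 = (D t * c₂) ^ 2 := by
      have e : ((α t)⁻¹ ^ 2 * b₂ t) ^ 2 = ((α t) ^ (4 : ℕ))⁻¹ * (b₂ t) ^ 2 := by
        field_simp
      have hb0ne : b₀ t ≠ 0 := ne_of_gt (hb₀pos t)
      have hb2ne : b₂ t ≠ 0 := ne_of_gt (hb₂pos t)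
      have hc0ne : c₀ ≠ 0 := ne_of_gt hc₀
      have hc2ne : c₂ ≠ 0 := ne_of_gt hc₂
      rw [e, hα4 t, mul_pow, hD2 t]
      field_simp
    nlinarith [hsq, hl, hr]
  constructor
  · intro h t
    have := (h t).2.1
    rw [← hderiv t] at *
    rw [this, hD t]
    ring
  · intro h t
    refine ⟨h0 t, ?_, h2 t⟩
    rw [hderiv t, h t, hD t]
    ring
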